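/- Let 𝓕 be a finite family of finite sets. Then 𝔣𝔯(𝓕) = 0 if and only if 𝓕 is linearly ordered by inclusion, i.e., for all A, B ∈ 𝓕, either A ⊆ B or B ⊆ A. -/

import Mathlib

open Cardinal

noncomputable section

/-- The underlying set of the ordinal `ω_n`, the least ordinal of cardinality `ℵ_n`,
realized as a type. -/
abbrev OmegaN (n : ℕ) : Type := ((Cardinal.aleph n).ord).ToType

/-- `n` is *free* for the family `𝓕` of finite sets: for every set mapping
`S : [ω_n]^{<ω} → [ω_n]^{<ω}` there is a bijection `u` from `⋃ 𝓕` onto a subset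
`Y = u '' (⋃ 𝓕)` of `ω_n` such that `S (u '' A) ∩ Y ⊆ u '' A` for all `A ∈ 𝓕`. -/
def IsFree {α : Type*} [DecidableEq α] (𝓕 : Finset (Finset α)) (n : ℕ) : Prop :=
  ∀ S : Finset (OmegaN n) → Finset (OmegaN n),
    ∃ u : α → OmegaN n, Set.InjOn u ↑(𝓕.sup id) ∧
      ∀ A ∈ 𝓕, S (A.image u) ∩ (𝓕.sup id).image u ⊆ A.image u

/-- The index `𝔣𝔯 𝓕`: the least `n` which is free for `𝓕`. -/
noncomputable def fr {α : Type*} [DecidableEq α] (𝓕 : Finset (Finset α)) : ℕ :=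
  sInf {n | IsFree 𝓕 n}

/-- Conditions (1)–(4) of a nested-orders family on `X`,
where a sequence `(t₁, …, t_k)` is represented by the list `[t₁, …, t_k]`. -/
def NestedBase {α : Type*} (X : Set α) (S : Set (List α)) : Prop :=
  (∀ l ∈ S, ∀ x ∈ l, x ∈ X) ∧
  (∀ t ∈ X, [t] ∈ S) ∧
  (∀ l ∈ S, l.Nodup) ∧
  (∀ (l : List α) (t : α), l ++ [t] ∈ S → l ∈ S) ∧
  (∀ (l : List α) (s t : α), l ++ [s, t] ∈ S → l ++ [t] ∈ S) ∧
  (∀ (l : List α) (s t u : α), l ++ [s, t] ∈ S → l ++ [t, u] ∈ S → l ++ [s, u] ∈ S)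

/-- A nested-orders family on `X`: conditions (1)–(5). -/
def IsNestedOrders {α : Type*} (X : Set α) (S : Set (List α)) : Prop :=
  NestedBase X S ∧
  ∀ (l : List α) (s t : α), l ++ [t] ∈ S → l ++ [s] ∈ S → t ≠ s →
    (l ++ [t, s] ∈ S ∨ l ++ [s, t] ∈ S)

/-- An `n`-nested-orders family on `X`: sequences of length at most `n+2`,
conditions (1)–(4), and condition (5) for `k < n`. -/
def IsNNestedOrders {α : Type*} (n : ℕ) (X : Set α) (S : Set (List α)) : Prop :=
  NestedBase X S ∧
  (∀ l ∈ S, l.length ≤ n + 2) ∧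
  ∀ (l : List α) (s t : α), l.length < n → l ++ [t] ∈ S → l ++ [s] ∈ S → t ≠ s →
    (l ++ [t, s] ∈ S ∨ l ++ [s, t] ∈ S)

/-- `A` satisfies the defining condition of membership in `𝓕_{𝔖,n}`: whenever
`(t₁, …, t_{n+2}) ∈ 𝔖` and `t₁, …, t_{n+1} ∈ A`, also `t_{n+2} ∈ A`. -/
def MemFam {α : Type*} (n : ℕ) (S : Set (List α)) (A : Finset α) : Prop :=
  ∀ (l : List α) (t : α), l.length = n + 1 → l ++ [t] ∈ S →
    (∀ x ∈ l, x ∈ A) → t ∈ A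

/-- The index `𝔫𝔬 𝓕`: the least `n` for which there is an `n`-nested-orders family `𝔖`
on `⋃ 𝓕` with `𝓕 ⊆ 𝓕_{𝔖,n}`. -/
noncomputable def no {α : Type*} [DecidableEq α] (𝓕 : Finset (Finset α)) : ℕ :=
  sInf {n | ∃ S : Set (List α),
    IsNNestedOrders n ↑(𝓕.sup id) S ∧ ∀ A ∈ 𝓕, MemFam n S A}



/-- The closure iteration used in the proof of the free set theorem. -/
def closSeq {β : Type} (C C₀ : Set β) (G : Finset β → Finset β) : ℕ → Set β
  | 0 => C₀
  | (k+1) => closSeq C C₀ G k ∪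
      (C ∩ ⋃ (B : Finset β) (_ : ↑B ⊆ closSeq C C₀ G k), ↑(G B))

/-- Kuratowski-style free set theorem: in a set of cardinality at least `ℵ_n`
there is a free set of size `n+1` for any set mapping on finite sets. -/
lemma kuratowski_free {β : Type} [DecidableEq β] :
    ∀ (n : ℕ) (C : Set β) (G : Finset β → Finset β), Cardinal.aleph n ≤ #↥C →
      ∃ Y : Finset β, ↑Y ⊆ C ∧ Y.card = n + 1 ∧
        ∀ B ⊆ Y, ∀ y ∈ Y, y ∉ B → y ∉ G B := by
  classical
  intro n
  induction n with
  | zero =>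
    intro C G hC
    have hCinf : C.Infinite := by
      rw [← Set.infinite_coe_iff, Cardinal.infinite_iff]
      simpa using hC
    obtain ⟨y, hyC, hyG⟩ := (hCinf.diff (G ∅).finite_toSet).nonempty
    refine ⟨{y}, by simpa using hyC, rfl, ?_⟩
    intro B hB z hz hzB
    rcases Finset.subset_singleton_iff.mp hB with rfl | rfl
    · simp only [Finset.mem_singleton] at hz
      subst hz
      exact fun h => hyG h
    · exact absurd hz hzB
  | succ n ih =>
    intro C G hC
    have haln : (ℵ₀ : Cardinal) ≤ Cardinal.aleph n := Cardinal.aleph0_le_aleph n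
    have h0 : Cardinal.aleph n ≤ #↥C :=
      le_trans (Cardinal.aleph_le_aleph.mpr (by exact_mod_cast Nat.le_succ n)) hC
    obtain ⟨C₀, hC₀C, hC₀⟩ := Cardinal.le_mk_iff_exists_subset.mp h0
    -- the closure iteration
    set D : ℕ → Set β := closSeq C C₀ G with hDdef
    have hDsucc : ∀ k, D (k + 1) = D k ∪ (C ∩ ⋃ (B : Finset β) (_ : ↑B ⊆ D k), ↑(G B)) :=
      fun k => rfl
    have hDmono : Monotone D := monotone_nat_of_le_succ (fun k => by
      rw [hDsucc]; exact Set.subset_union_left)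
    have hD0 : ∀ k, C₀ ⊆ D k := fun k => hDmono (Nat.zero_le k)
    have hDsub : ∀ k, D k ⊆ C := by
      intro k
      induction k with
      | zero => exact hC₀C
      | succ k ihk => rw [hDsucc]; exact Set.union_subset ihk Set.inter_subset_left
    have hDcard : ∀ k, #↥(D k) ≤ Cardinal.aleph n := by
      intro k
      induction k with
      | zero => exact le_of_eq hC₀
      | succ k ihk =>
        rw [hDsucc]
        refine le_trans (Cardinal.mk_union_le _ _) ?_
        have hinter : #↥(C ∩ ⋃ (B : Finset β) (_ : ↑B ⊆ D k), ↑(G B) : Set β)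
            ≤ Cardinal.aleph n := by
          refine le_trans (Cardinal.mk_le_mk_of_subset Set.inter_subset_right) ?_
          have hrw : (⋃ (B : Finset β) (_ : ↑B ⊆ D k), (↑(G B) : Set β))
              = ⋃ (i : {B : Finset β // ↑B ⊆ D k}), (↑(G i.1) : Set β) := by
            rw [Set.iUnion_subtype]
          rw [hrw]
          refine le_trans Cardinal.mk_iUnion_le_sum_mk ?_
          refine le_trans (Cardinal.sum_le_sum _ (fun _ => (ℵ₀ : Cardinal)) ?_) ?_
          · intro i
            exact ((G i.1).finite_toSet.lt_aleph0).le
          · rw [Cardinal.sum_const']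
            have hI : #{B : Finset β // ↑B ⊆ D k} ≤ Cardinal.aleph n := by
              have hval : ∀ B : Finset β, Set.InjOn (Subtype.val : ↥(D k) → β)
                  (Subtype.val ⁻¹' ↑B) :=
                fun B => Set.injOn_of_injective Subtype.val_injective
              have hinj : Function.Injective
                  (fun i : {B : Finset β // ↑B ⊆ D k} =>
                    i.1.preimage (Subtype.val : ↥(D k) → β) (hval i.1)) := by
                intro i j hij
                simp only at hij
                apply Subtype.ext
                ext b
                constructor
                · intro hb
                  have hb' : (⟨b, i.2 hb⟩ : ↥(D k)) ∈
                      i.1.preimage (Subtype.val : ↥(D k) → β) (hval i.1) :=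
                    Finset.mem_preimage.mpr hb
                  rw [hij] at hb'
                  exact Finset.mem_preimage.mp hb'
                · intro hb
                  have hb' : (⟨b, j.2 hb⟩ : ↥(D k)) ∈
                      j.1.preimage (Subtype.val : ↥(D k) → β) (hval j.1) :=
                    Finset.mem_preimage.mpr hb
                  rw [← hij] at hb'
                  exact Finset.mem_preimage.mp hb'
              refine le_trans (Cardinal.mk_le_of_injective hinj) ?_
              haveI : Infinite ↥(D k) := Cardinal.infinite_iff.mpr
                (haln.trans (hC₀.ge.trans (Cardinal.mk_le_mk_of_subset (hD0 k))))
              rw [Cardinal.mk_finset_of_infinite]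
              exact ihk
            calc #{B : Finset β // ↑B ⊆ D k} * ℵ₀ ≤ Cardinal.aleph n * ℵ₀ :=
                  mul_le_mul_left hI _
            _ = Cardinal.aleph n := by
                rw [Cardinal.mul_eq_max haln le_rfl, max_eq_left haln]
        calc #↥(D k) + #↥(C ∩ ⋃ (B : Finset β) (_ : ↑B ⊆ D k), ↑(G B) : Set β)
            ≤ Cardinal.aleph n + Cardinal.aleph n := add_le_add ihk hinter
        _ = Cardinal.aleph n := Cardinal.add_eq_self haln
    -- the closure
    set C' : Set β := ⋃ k, D k with hC'def
    have hC'sub : C' ⊆ C := Set.iUnion_subset hDsub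
    have hC'card : #↥C' ≤ Cardinal.aleph n := by
      refine le_trans Cardinal.mk_iUnion_le_sum_mk ?_
      refine le_trans (Cardinal.sum_le_sum _ (fun _ => Cardinal.aleph n) hDcard) ?_
      rw [Cardinal.sum_const', Cardinal.mk_nat,
        Cardinal.mul_eq_max le_rfl haln, max_eq_right haln]
    have hC'big : Cardinal.aleph n ≤ #↥C' :=
      hC₀ ▸ Cardinal.mk_le_mk_of_subset (Set.subset_iUnion D 0)
    -- a point of C outside C'
    have hex : ∃ x, x ∈ C ∧ x ∉ C' := by
      by_contra hcon
      push_neg at hcon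
      have : #↥C ≤ #↥C' := Cardinal.mk_le_mk_of_subset hcon
      have : Cardinal.aleph (n + 1) ≤ Cardinal.aleph n :=
        le_trans hC (le_trans this hC'card)
      rw [Cardinal.aleph_le_aleph] at this
      exact absurd this (by exact_mod_cast Nat.not_succ_le_self n)
    obtain ⟨x, hxC, hxC'⟩ := hex
    -- closure property
    have hclosed : ∀ B : Finset β, ↑B ⊆ C' → ∀ y ∈ G B, y ∈ C → y ∈ C' := by
      intro B hB y hyG hyC
      obtain ⟨k, hk⟩ := (hDmono.directed_le).exists_mem_subset_of_finset_subset_biUnion hB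
      have : y ∈ D (k + 1) := by
        rw [hDsucc]
        refine Or.inr ⟨hyC, ?_⟩
        exact Set.mem_iUnion.mpr ⟨B, Set.mem_iUnion.mpr ⟨hk, hyG⟩⟩
      exact Set.mem_iUnion.mpr ⟨k + 1, this⟩
    -- apply the induction hypothesis inside C'
    obtain ⟨Y', hY'sub, hY'card, hY'free⟩ :=
      ih C' (fun A => G A ∪ G (insert x A)) hC'big
    have hxY' : x ∉ Y' := fun h => hxC' (hY'sub h)
    refine ⟨insert x Y', ?_, ?_, ?_⟩
    · rw [Finset.coe_insert]
      exact Set.insert_subset hxC (hY'sub.trans hC'sub)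
    · rw [Finset.card_insert_of_notMem hxY', hY'card]
    · intro B hB y hy hyB
      rcases Finset.mem_insert.mp hy with rfl | hyY'
      · -- y = x
        have hBC' : ↑B ⊆ C' := by
          intro b hb
          have hbY : b ∈ insert y Y' := hB hb
          rcases Finset.mem_insert.mp hbY with rfl | hbY'
          · exact absurd hb hyB
          · exact hY'sub hbY'
        intro hxG
        exact hxC' (hclosed B hBC' _ hxG hxC)
      · have hyx : y ≠ x := fun h => hxC' (h ▸ hY'sub hyY')
        by_cases hxB : x ∈ B
        · have hsub : B.erase x ⊆ Y' := by
            intro b hb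
            have hbB := Finset.mem_of_mem_erase hb
            rcases Finset.mem_insert.mp (hB hbB) with rfl | h
            · exact absurd rfl (Finset.ne_of_mem_erase hb)
            · exact h
          have hyBe : y ∉ B.erase x := fun h => hyB (Finset.mem_of_mem_erase h)
          have := hY'free (B.erase x) hsub y hyY' hyBe
          rw [Finset.insert_erase hxB] at this
          exact fun h => this (Finset.mem_union_right _ h)
        · have hsub : B ⊆ Y' := by
            intro b hb
            rcases Finset.mem_insert.mp (hB hb) with rfl | h
            · exact absurd hb hxB
            · exact h
          have := hY'free B hsub y hyY' hyB
          exact fun h => this (Finset.mem_union_left _ h)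

lemma omegaN_mk (n : ℕ) : #(OmegaN n) = Cardinal.aleph n := Cardinal.mk_ord_toType _

lemma omegaN_infinite (n : ℕ) : Infinite (OmegaN n) :=
  Cardinal.infinite_iff.mpr (by rw [omegaN_mk]; exact Cardinal.aleph0_le_aleph n)

/-- An injection of a finset into an infinite type avoiding a finite set. -/
lemma exists_injOn_avoid {α β : Type*} [Infinite β] (U : Finset α) (E : Finset β) :
    ∃ u : α → β, Set.InjOn u ↑U ∧ ∀ t ∈ U, u t ∉ E := by
  classical
  have hinf : ((↑E : Set β)ᶜ).Infinite := E.finite_toSet.infinite_compl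
  haveI := hinf.to_subtype
  let g : ℕ ↪ ((↑E : Set β)ᶜ : Set β) := Infinite.natEmbedding _
  let e := Fintype.equivFin ↥U
  haveI : Nonempty β := ⟨(g 0).1⟩
  refine ⟨fun a => if h : a ∈ U then (g (e ⟨a, h⟩)).1 else Classical.arbitrary β, ?_, ?_⟩
  · intro a ha b hb hab
    simp only [Finset.mem_coe] at ha hb
    simp only [dif_pos ha, dif_pos hb] at hab
    have := e.injective (Fin.val_injective (g.injective (Subtype.ext hab)))
    exact congrArg Subtype.val this
  · intro t ht hmem
    simp only [dif_pos ht] at hmem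
    exact (g (e ⟨t, ht⟩)).2 hmem

/-- The key chain construction: a chain family can be freely embedded in any
infinite type, avoiding any fixed finite set. -/
lemma chain_free_aux {α : Type*} [DecidableEq α] {β : Type*} [DecidableEq β] [Infinite β] :
    ∀ (k : ℕ) (𝓕 : Finset (Finset α)), 𝓕.card ≤ k →
      (∀ A ∈ 𝓕, ∀ B ∈ 𝓕, A ⊆ B ∨ B ⊆ A) →
      ∀ (U : Finset α), (∀ A ∈ 𝓕, A ⊆ U) →
      ∀ (S : Finset β → Finset β) (E : Finset β),
      ∃ u : α → β, Set.InjOn u ↑U ∧ (∀ t ∈ U, u t ∉ E) ∧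
        ∀ A ∈ 𝓕, S (A.image u) ∩ U.image u ⊆ A.image u := by
  classical
  intro k
  induction k with
  | zero =>
    intro 𝓕 h𝓕 _ U _ S E
    have h𝓕e : 𝓕 = ∅ := Finset.card_eq_zero.mp (Nat.le_zero.mp h𝓕)
    subst h𝓕e
    obtain ⟨u, h1, h2⟩ := exists_injOn_avoid U E
    exact ⟨u, h1, h2, by simp⟩
  | succ k ih =>
    intro 𝓕 h𝓕 hch U hU S E
    rcases Nat.lt_or_ge 𝓕.card (k + 1) with hlt | hge
    · exact ih 𝓕 (Nat.lt_succ_iff.mp hlt) hch U hU S E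
    -- 𝓕 is nonempty; pick a maximal element T
    have hne : 𝓕.Nonempty := Finset.card_pos.mp (lt_of_lt_of_le (Nat.succ_pos k) hge)
    obtain ⟨T, hT, hTmax⟩ :=
      Set.Finite.exists_maximalFor id (↑𝓕 : Set (Finset α)) 𝓕.finite_toSet (by exact_mod_cast hne)
    simp only [Finset.mem_coe, id] at hT hTmax
    have hTtop : ∀ A ∈ 𝓕, A ⊆ T := by
      intro A hA
      rcases hch A hA T hT with h | h
      · exact h
      · exact hTmax hA h
    set 𝓕' := 𝓕.erase T with h𝓕'
    have h𝓕'card : 𝓕'.card ≤ k := by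
      rw [h𝓕', Finset.card_erase_of_mem hT]
      omega
    obtain ⟨u₀, h0inj, h0E, h0cond⟩ := ih 𝓕' h𝓕'card
      (fun A hA B hB => hch A (Finset.mem_of_mem_erase hA) B (Finset.mem_of_mem_erase hB))
      T (fun A hA => hTtop A (Finset.mem_of_mem_erase hA)) S E
    set E' : Finset β := (E ∪ T.image u₀) ∪ 𝓕.sup (fun A => S (A.image u₀)) with hE'
    obtain ⟨v, hvinj, hvE'⟩ := exists_injOn_avoid (U \ T) E'
    set u : α → β := fun a => if a ∈ T then u₀ a else v a with hu
    have huT : ∀ a ∈ T, u a = u₀ a := fun a ha => if_pos ha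
    have huV : ∀ a, a ∉ T → u a = v a := fun a ha => if_neg ha
    have himg : ∀ A ∈ 𝓕, A.image u = A.image u₀ := by
      intro A hA
      exact Finset.image_congr (fun a ha => huT a (hTtop A hA ha))
    have hTU : T ⊆ U := hU T hT
    refine ⟨u, ?_, ?_, ?_⟩
    · -- injectivity on U
      intro a ha b hb hab
      simp only [Finset.mem_coe] at ha hb
      by_cases haT : a ∈ T <;> by_cases hbT : b ∈ T
      · exact h0inj (Finset.mem_coe.mpr haT) (Finset.mem_coe.mpr hbT)
          (by rwa [huT a haT, huT b hbT] at hab)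
      · exfalso
        rw [huT a haT, huV b hbT] at hab
        have h1 : u₀ a ∈ T.image u₀ := Finset.mem_image_of_mem u₀ haT
        have h2 : v b ∉ E' := hvE' b (Finset.mem_sdiff.mpr ⟨hb, hbT⟩)
        rw [← hab] at h2
        exact h2 (by rw [hE']; exact Finset.mem_union_left _ (Finset.mem_union_right _ h1))
      · exfalso
        rw [huV a haT, huT b hbT] at hab
        have h1 : u₀ b ∈ T.image u₀ := Finset.mem_image_of_mem u₀ hbT
        have h2 : v a ∉ E' := hvE' a (Finset.mem_sdiff.mpr ⟨ha, haT⟩)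
        rw [hab] at h2
        exact h2 (by rw [hE']; exact Finset.mem_union_left _ (Finset.mem_union_right _ h1))
      · exact hvinj (Finset.mem_coe.mpr (Finset.mem_sdiff.mpr ⟨ha, haT⟩))
          (Finset.mem_coe.mpr (Finset.mem_sdiff.mpr ⟨hb, hbT⟩))
          (by rwa [huV a haT, huV b hbT] at hab)
    · -- avoiding E
      intro t ht
      by_cases htT : t ∈ T
      · rw [huT t htT]; exact h0E t htT
      · rw [huV t htT]
        intro hmem
        exact hvE' t (Finset.mem_sdiff.mpr ⟨ht, htT⟩)
          (by rw [hE']; exact Finset.mem_union_left _ (Finset.mem_union_left _ hmem))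
    · -- the freeness condition
      intro A hA y hy
      rw [Finset.mem_inter] at hy
      obtain ⟨hyS, hyU⟩ := hy
      rw [himg A hA] at hyS
      obtain ⟨t, htU, rfl⟩ := Finset.mem_image.mp hyU
      by_cases htT : t ∈ T
      · have hut : u t = u₀ t := huT t htT
        have hyT : u t ∈ T.image u₀ := by
          rw [hut]; exact Finset.mem_image_of_mem u₀ htT
        rw [himg A hA]
        by_cases hAT : A = T
        · subst hAT; exact hyT
        · have hA' : A ∈ 𝓕' := Finset.mem_erase.mpr ⟨hAT, hA⟩
          exact h0cond A hA' (Finset.mem_inter.mpr ⟨hyS, hyT⟩)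
      · exfalso
        have hvt : u t = v t := huV t htT
        have h2 : v t ∉ E' := hvE' t (Finset.mem_sdiff.mpr ⟨htU, htT⟩)
        apply h2
        rw [hE']
        refine Finset.mem_union_right _ ?_
        have hle : S (A.image u₀) ≤ 𝓕.sup (fun A => S (A.image u₀)) :=
          Finset.le_sup (f := fun A => S (A.image u₀)) hA
        exact hle (by rw [← hvt]; exact hyS)

/-- Every family is free for `n = |⋃𝓕|`. -/
lemma isFree_card {α : Type*} [DecidableEq α] (𝓕 : Finset (Finset α)) :
    IsFree 𝓕 ((𝓕.sup id).card) := by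
  classical
  intro S
  have hU : 𝓕.sup id = 𝓕.sup id := rfl
  haveI : Infinite (OmegaN ((𝓕.sup id).card)) := omegaN_infinite _
  obtain ⟨Y, -, hYcard, hYfree⟩ := kuratowski_free ((𝓕.sup id).card) Set.univ S
    (by rw [Cardinal.mk_univ, omegaN_mk])
  have hcard : Fintype.card ↥(𝓕.sup id) ≤ Fintype.card ↥Y := by
    simp only [Fintype.card_coe, hYcard]
    omega
  obtain ⟨f⟩ := Function.Embedding.nonempty_of_card_le hcard
  set u : α → OmegaN ((𝓕.sup id).card) := fun a =>
    if h : a ∈ 𝓕.sup id then ((f ⟨a, h⟩ : ↥Y) : OmegaN ((𝓕.sup id).card))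
    else Classical.arbitrary _ with hu
  have humem : ∀ a ∈ 𝓕.sup id, u a ∈ Y := by
    intro a ha
    rw [hu]
    simp only [dif_pos ha]
    exact (f ⟨a, ha⟩).2
  have huapp : ∀ a (h : a ∈ 𝓕.sup id),
      u a = ((f ⟨a, h⟩ : ↥Y) : OmegaN ((𝓕.sup id).card)) :=
    fun a h => dif_pos h
  refine ⟨u, ?_, ?_⟩
  · intro a ha b hb hab
    simp only [Finset.mem_coe] at ha hb
    rw [huapp a ha, huapp b hb] at hab
    have := f.injective (Subtype.ext hab)
    exact congrArg Subtype.val this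
  · intro A hA y hy
    rw [Finset.mem_inter] at hy
    obtain ⟨hyS, hyU⟩ := hy
    obtain ⟨t, htU, rfl⟩ := Finset.mem_image.mp hyU
    have hAU : A ⊆ 𝓕.sup id := Finset.le_sup (f := id) hA
    by_contra hnot
    have hBY : A.image u ⊆ Y := by
      intro z hz
      obtain ⟨a, ha, rfl⟩ := Finset.mem_image.mp hz
      exact humem a (hAU ha)
    exact hYfree (A.image u) hBY (u t) (humem t htU) hnot hyS

/-- If `0` is free for `𝓕`, then `𝓕` is a chain. -/
lemma chain_of_isFree_zero {α : Type*} [DecidableEq α] (𝓕 : Finset (Finset α))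
    (h : IsFree 𝓕 0) : ∀ A ∈ 𝓕, ∀ B ∈ 𝓕, A ⊆ B ∨ B ⊆ A := by
  classical
  by_contra hnot
  push_neg at hnot
  obtain ⟨A, hA, B, hB, hAB, hBA⟩ := hnot
  obtain ⟨a, haA, haB⟩ := Finset.not_subset.mp hAB
  obtain ⟨b, hbB, hbA⟩ := Finset.not_subset.mp hBA
  have hmk : #(OmegaN 0) = #ℕ := by
    rw [omegaN_mk, Cardinal.mk_nat]
    simp
  obtain ⟨e⟩ := Cardinal.eq.mp hmk
  set S : Finset (OmegaN 0) → Finset (OmegaN 0) := fun F =>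
    (Finset.range ((F.image e).sup id + 1)).image e.symm with hS
  obtain ⟨u, huinj, hucond⟩ := h S
  set U := 𝓕.sup id with hUdef
  have hAU : A ⊆ U := Finset.le_sup (f := id) hA
  have hBU : B ⊆ U := Finset.le_sup (f := id) hB
  have hmemS : ∀ (F : Finset (OmegaN 0)) (z : OmegaN 0),
      e z ≤ (F.image e).sup id → z ∈ S F := by
    intro F z hz
    rw [hS]
    refine Finset.mem_image.mpr ⟨e z, ?_, e.symm_apply_apply z⟩
    rw [Finset.mem_range]
    omega
  have key : ∀ X ∈ 𝓕, ∀ s t : α, s ∈ X → t ∈ U → t ∉ X → e (u s) < e (u t) := by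
    intro X hX s t hsX htU htX
    have hXU : X ⊆ U := Finset.le_sup (f := id) hX
    have h1 : e (u s) ≤ ((X.image u).image e).sup id := by
      refine Finset.le_sup (f := id) ?_
      exact Finset.mem_image_of_mem e (Finset.mem_image_of_mem u hsX)
    rcases Nat.lt_or_ge (((X.image u).image e).sup id) (e (u t)) with hlt | hge
    · omega
    · exfalso
      have hmem : u t ∈ S (X.image u) := hmemS _ _ hge
      have : u t ∈ X.image u :=
        hucond X hX (Finset.mem_inter.mpr ⟨hmem, Finset.mem_image_of_mem u htU⟩)
      obtain ⟨x, hxX, hxu⟩ := Finset.mem_image.mp this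
      have : x = t := huinj (Finset.mem_coe.mpr (hXU hxX)) (Finset.mem_coe.mpr htU) hxu
      exact htX (this ▸ hxX)
  have h1 := key A hA a b haA (hBU hbB) hbA
  have h2 := key B hB b a hbB (hAU haA) haB
  omega

/-- A chain is free for `0`. -/
lemma isFree_zero_of_chain {α : Type*} [DecidableEq α] (𝓕 : Finset (Finset α))
    (hch : ∀ A ∈ 𝓕, ∀ B ∈ 𝓕, A ⊆ B ∨ B ⊆ A) : IsFree 𝓕 0 := by
  classical
  intro S
  haveI : Infinite (OmegaN 0) := omegaN_infinite 0
  obtain ⟨u, h1, -, h3⟩ := chain_free_aux 𝓕.card 𝓕 le_rfl hch (𝓕.sup id)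
    (fun A hA => Finset.le_sup (f := id) hA) S ∅
  exact ⟨u, h1, h3⟩


/-- `𝔣𝔯 𝓕 = 0` iff `𝓕` is linearly ordered by inclusion. -/
theorem statement3 {α : Type*} [DecidableEq α] (𝓕 : Finset (Finset α)) :
    fr 𝓕 = 0 ↔ ∀ A ∈ 𝓕, ∀ B ∈ 𝓕, A ⊆ B ∨ B ⊆ A := by
  constructor
  · intro h
    have hne : {n | IsFree 𝓕 n}.Nonempty := ⟨_, isFree_card 𝓕⟩
    rcases Nat.sInf_eq_zero.mp h with h0 | hempty
    · exact chain_of_isFree_zero 𝓕 h0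
    · exact absurd hempty hne.ne_empty
  · intro hch
    exact Nat.sInf_eq_zero.mpr (Or.inl (isFree_zero_of_chain 𝓕 hch))


end
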